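/- Let P be a compact self-adjoint positive operator on a separable real Hilbert space with orthonormal eigenbasis (φᵢ) and eigenvalues λ₁ ≥ λ₂ ≥ ... ≥ 0. For any m orthonormal vectors f₁,...,fₘ, Σᵢ₌₁ᵐ ⟨fᵢ, P fᵢ⟩ ≤ Σᵢ₌₁ᵐ λᵢ. -/

import Mathlib

/-- Infinite-dimensional Ky Fan / trace variational inequality: for a compact
self-adjoint positive operator `P` on a separable real Hilbert space with orthonormal
eigenbasis `φ` (dense span) and eigenvalues `lam 0 ≥ lam 1 ≥ ... ≥ 0`, and any
orthonormal family `f 0, ..., f (m-1)`,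
`Σᵢ ⟪f i, P (f i)⟫ ≤ Σᵢ lam i`. -/
theorem trace_variational_inequality
    {H : Type*} [NormedAddCommGroup H] [InnerProductSpace ℝ H] [CompleteSpace H]
    [TopologicalSpace.SeparableSpace H]
    (P : H →L[ℝ] H) (hP : IsSelfAdjoint P) (hPc : IsCompactOperator ⇑P)
    (lam : ℕ → ℝ) (hlam : Antitone lam) (hnonneg : ∀ i, 0 ≤ lam i)
    (φ : ℕ → H) (hφo : Orthonormal ℝ φ)
    (hEig : ∀ i, P (φ i) = lam i • φ i)
    (hspan : Dense (↑(Submodule.span ℝ (Set.range φ)) : Set H))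
    (m : ℕ) (f : Fin m → H) (hf : Orthonormal ℝ f) :
    ∑ i : Fin m, (inner ℝ (f i) (P (f i)) : ℝ) ≤ ∑ i : Fin m, lam i := by
  classical
  have hsp : ⊤ ≤ (Submodule.span ℝ (Set.range φ)).topologicalClosure :=
    (Submodule.dense_iff_topologicalClosure_eq_top.mp hspan).ge
  let b : HilbertBasis ℕ ℝ H := HilbertBasis.mk hφo hsp
  have hb : ∀ j, b j = φ j := by
    intro j
    rw [HilbertBasis.coe_mk]
  -- key expansion of each Rayleigh quotient
  have key : ∀ i, HasSum (fun j => lam j * (inner ℝ (φ j) (f i) : ℝ) ^ 2)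
      ((inner ℝ (f i) (P (f i)) : ℝ)) := by
    intro i
    have h := b.hasSum_inner_mul_inner (f i) (P (f i))
    convert h using 1
    · rfl
    funext j
    rw [hb]
    have hsym : (inner ℝ (P (φ j)) (f i) : ℝ) = inner ℝ (φ j) (P (f i)) :=
      hP.isSymmetric (φ j) (f i)
    rw [← hsym, hEig, real_inner_smul_left, real_inner_comm (f i) (φ j)]
    ring
  -- Parseval for each f i
  have hPar : ∀ i, HasSum (fun j => (inner ℝ (φ j) (f i) : ℝ) ^ 2) 1 := by
    intro i
    have h := b.hasSum_inner_mul_inner (f i) (f i)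
    have hnorm : (inner ℝ (f i) (f i) : ℝ) = 1 := by
      rw [real_inner_self_eq_norm_sq, hf.1 i]; norm_num
    rw [hnorm] at h
    convert h using 1
    · rfl
    funext j
    rw [hb, real_inner_comm (f i) (φ j)]
    ring
  set t : ℕ → ℝ := fun j => ∑ i : Fin m, (inner ℝ (φ j) (f i) : ℝ) ^ 2 with ht_def
  have ht0 : ∀ j, 0 ≤ t j := fun j =>
    Finset.sum_nonneg fun i _ => sq_nonneg _
  have ht1 : ∀ j, t j ≤ 1 := by
    intro j
    have h := hf.sum_inner_products_le (s := Finset.univ) (φ j)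
    have hφn : ‖φ j‖ = 1 := hφo.1 j
    calc t j = ∑ i : Fin m, ‖(inner ℝ (f i) (φ j) : ℝ)‖ ^ 2 := by
          refine Finset.sum_congr rfl fun i _ => ?_
          rw [Real.norm_eq_abs, sq_abs, real_inner_comm]
      _ ≤ ‖φ j‖ ^ 2 := h
      _ = 1 := by rw [hφn]; norm_num
  have htm : HasSum t (m : ℝ) := by
    have h := hasSum_sum (f := fun (i : Fin m) j => (inner ℝ (φ j) (f i) : ℝ) ^ 2)
      (s := Finset.univ) (a := fun _ => (1 : ℝ)) (fun i _ => hPar i)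
    simpa using h
  have hS : HasSum (fun j => lam j * t j)
      (∑ i : Fin m, (inner ℝ (f i) (P (f i)) : ℝ)) := by
    have h := hasSum_sum (f := fun (i : Fin m) j => lam j * (inner ℝ (φ j) (f i) : ℝ) ^ 2)
      (s := Finset.univ) (a := fun i => (inner ℝ (f i) (P (f i)) : ℝ)) (fun i _ => key i)
    convert h using 1
    funext j
    rw [ht_def, Finset.mul_sum]
  -- the majorant
  have h1 : HasSum (fun j => lam m * t j) (lam m * m) := htm.mul_left _
  have h2 : HasSum (fun j => if j < m then lam j - lam m else 0)
      (∑ j ∈ Finset.range m, (lam j - lam m)) := by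
    have := hasSum_sum_of_ne_finset_zero (s := Finset.range m) (L := SummationFilter.unconditional ℕ)
      (f := fun j => if j < m then lam j - lam m else 0)
      (by intro j hj; simp [Finset.mem_range] at hj; simp [hj])
    convert this using 1
    refine (Finset.sum_congr rfl fun j hj => ?_).symm
    simp [Finset.mem_range.mp hj]
  have hmain := hasSum_le (f := fun j => lam j * t j)
    (g := fun j => lam m * t j + if j < m then lam j - lam m else 0)
    (by
      intro j
      by_cases hj : j < m
      · have h3 : lam m ≤ lam j := hlam hj.le
        simp only [hj, if_pos]
        nlinarith [ht0 j, ht1 j]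
      · have h3 : lam j ≤ lam m := hlam (not_lt.mp hj)
        simp only [hj, if_neg, not_false_iff]
        nlinarith [ht0 j, ht1 j])
    hS (h1.add h2)
  calc ∑ i : Fin m, (inner ℝ (f i) (P (f i)) : ℝ)
      ≤ lam m * m + ∑ j ∈ Finset.range m, (lam j - lam m) := hmain
    _ = ∑ j ∈ Finset.range m, lam j := by
        rw [Finset.sum_sub_distrib, Finset.sum_const, Finset.card_range, nsmul_eq_mul]
        ring
    _ = ∑ i : Fin m, lam i := (Fin.sum_univ_eq_sum_range lam m).symm
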